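/- Let g : ℝ → ℝ be differentiable on a neighborhood of z and twice differentiable at z, with |g(z)| ≤ X, |g'(z)| ≤ Y, and |g''(z)| ≤ Z, let d ∈ ℝ with |d| ≤ R, and let γ ≥ 0, with X, Y, Z, R ≥ 0. Then the function E(t) = exp(−γ (g(t) − d)²) is twice differentiable at z and |E''(z)| ≤ 2γ·[ (1 + 2γ(X + R)²)·Y² + (X + R)·Z ]. -/

import Mathlib

/-- **Second derivative bound for a Gaussian kernel composed with a scalar map.**
If `g` is differentiable on a neighborhood of `z` and twice differentiable at
`z`, with `|g(z)| ≤ X`, `|g'(z)| ≤ Y`, `|g''(z)| ≤ Z`, and `|d| ≤ R`, then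
`E(t) = exp(−γ(g(t)−d)²)` is twice differentiable at `z` and
`|E''(z)| ≤ 2γ[(1 + 2γ(X+R)²)Y² + (X+R)Z]`. -/
theorem gaussian_kernel_second_deriv_bound (g : ℝ → ℝ) (z d γ X Y Z R : ℝ)
    (hγ : 0 ≤ γ) (hX : 0 ≤ X) (hY : 0 ≤ Y) (hZ : 0 ≤ Z) (hR : 0 ≤ R)
    (hg : ∀ᶠ t in nhds z, DifferentiableAt ℝ g t)
    (hg2 : DifferentiableAt ℝ (deriv g) z)
    (hgz : |g z| ≤ X) (hg' : |deriv g z| ≤ Y) (hg'' : |deriv (deriv g) z| ≤ Z)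
    (hd : |d| ≤ R) :
    (∀ᶠ t in nhds z, DifferentiableAt ℝ (fun t => Real.exp (-γ * (g t - d) ^ 2)) t) ∧
      DifferentiableAt ℝ (deriv (fun t => Real.exp (-γ * (g t - d) ^ 2))) z ∧
      |deriv (deriv (fun t => Real.exp (-γ * (g t - d) ^ 2))) z| ≤
        2 * γ * ((1 + 2 * γ * (X + R) ^ 2) * Y ^ 2 + (X + R) * Z) := by
  have hgz0 : DifferentiableAt ℝ g z := hg.self_of_nhds
  -- first derivative, eventually
  have hEdiff : ∀ᶠ t in nhds z,
      DifferentiableAt ℝ (fun t => Real.exp (-γ * (g t - d) ^ 2)) t := by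
    filter_upwards [hg] with t ht
    exact (((ht.sub_const d).pow 2).const_mul (-γ)).exp
  have hderivE : ∀ᶠ t in nhds z, deriv (fun t => Real.exp (-γ * (g t - d) ^ 2)) t =
      Real.exp (-γ * (g t - d) ^ 2) * (-γ * (2 * ((g t - d) * deriv g t))) := by
    filter_upwards [hg] with t ht
    have h : deriv (fun t => Real.exp (-γ * (g t - d) ^ 2)) t =
        Real.exp (-γ * (g t - d) ^ 2) * (-γ * ((2:ℕ) * (g t - d) ^ (2 - 1) * deriv g t)) :=
      ((((ht.hasDerivAt.sub_const d).pow 2).const_mul (-γ)).exp).deriv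
    rw [h]; push_cast; ring
  -- second derivative via product rule at z
  have h1 : HasDerivAt g (deriv g z) z := hgz0.hasDerivAt
  have h2 : HasDerivAt (deriv g) (deriv (deriv g) z) z := hg2.hasDerivAt
  have hexp : HasDerivAt (fun t => Real.exp (-γ * (g t - d) ^ 2))
      (Real.exp (-γ * (g z - d) ^ 2) * (-γ * ((2:ℕ) * (g z - d) ^ 1 * deriv g z))) z :=
    (((h1.sub_const d).pow 2).const_mul (-γ)).exp
  have hG : HasDerivAt (fun t => -γ * (2 * ((g t - d) * deriv g t)))
      (-γ * (2 * (deriv g z * deriv g z + (g z - d) * deriv (deriv g) z))) z :=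
    (((h1.sub_const d).mul h2).const_mul 2).const_mul (-γ)
  have hF := hexp.mul hG
  have hdiff2 : DifferentiableAt ℝ
      (deriv (fun t => Real.exp (-γ * (g t - d) ^ 2))) z :=
    (Filter.EventuallyEq.differentiableAt_iff hderivE).mpr hF.differentiableAt
  have key : deriv (deriv (fun t => Real.exp (-γ * (g t - d) ^ 2))) z =
      Real.exp (-γ * (g z - d) ^ 2) * (-γ * ((2:ℕ) * (g z - d) ^ 1 * deriv g z)) *
        (-γ * (2 * ((g z - d) * deriv g z))) +
      Real.exp (-γ * (g z - d) ^ 2) *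
        (-γ * (2 * (deriv g z * deriv g z + (g z - d) * deriv (deriv g) z))) := by
    rw [Filter.EventuallyEq.deriv_eq hderivE]
    exact hF.deriv
  refine ⟨hEdiff, hdiff2, ?_⟩
  rw [key]
  set a := g z - d with ha
  set b := deriv g z with hb
  set c := deriv (deriv g) z with hc
  have hA : |a| ≤ X + R := (abs_sub _ _).trans (add_le_add hgz hd)
  have he1 : Real.exp (-γ * a ^ 2) ≤ 1 := by
    rw [Real.exp_le_one_iff]
    nlinarith [sq_nonneg a]
  have he0 : (0:ℝ) < Real.exp (-γ * a ^ 2) := Real.exp_pos _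
  have hDeq : Real.exp (-γ * a ^ 2) * (-γ * ((2:ℕ) * a ^ 1 * b)) * (-γ * (2 * (a * b))) +
      Real.exp (-γ * a ^ 2) * (-γ * (2 * (b * b + a * c))) =
      Real.exp (-γ * a ^ 2) * (4 * γ ^ 2 * a ^ 2 * b ^ 2 - 2 * γ * b ^ 2 - 2 * γ * (a * c)) := by
    push_cast; ring
  rw [hDeq, abs_mul, abs_of_pos he0]
  have hbound : |4 * γ ^ 2 * a ^ 2 * b ^ 2 - 2 * γ * b ^ 2 - 2 * γ * (a * c)| ≤
      2 * γ * ((1 + 2 * γ * (X + R) ^ 2) * Y ^ 2 + (X + R) * Z) := by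
    have hab : |a * c| ≤ (X + R) * Z := by
      rw [abs_mul]; exact mul_le_mul hA hg'' (abs_nonneg _) (by linarith)
    have ha2 : a ^ 2 ≤ (X + R) ^ 2 := by nlinarith [sq_abs a, abs_nonneg a]
    have hb2 : b ^ 2 ≤ Y ^ 2 := by nlinarith [sq_abs b, abs_nonneg b]
    have htri : |4 * γ ^ 2 * a ^ 2 * b ^ 2 - 2 * γ * b ^ 2 - 2 * γ * (a * c)| ≤
        |4 * γ ^ 2 * a ^ 2 * b ^ 2| + |2 * γ * b ^ 2| + |2 * γ * (a * c)| := by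
      calc _ ≤ |4 * γ ^ 2 * a ^ 2 * b ^ 2 - 2 * γ * b ^ 2| + |2 * γ * (a * c)| :=
              abs_sub _ _
        _ ≤ _ := by gcongr; exact abs_sub _ _
    refine htri.trans ?_
    have e1 : |4 * γ ^ 2 * a ^ 2 * b ^ 2| = 4 * γ ^ 2 * a ^ 2 * b ^ 2 :=
      abs_of_nonneg (by positivity)
    have e2 : |2 * γ * b ^ 2| = 2 * γ * b ^ 2 := abs_of_nonneg (by positivity)
    have e3 : |2 * γ * (a * c)| = 2 * γ * |a * c| := by
      rw [abs_mul]; congr 1; exact abs_of_nonneg (by positivity)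
    rw [e1, e2, e3]
    have t1 : a ^ 2 * b ^ 2 ≤ (X + R) ^ 2 * Y ^ 2 :=
      mul_le_mul ha2 hb2 (sq_nonneg b) (by positivity)
    have t1' : 4 * γ ^ 2 * (a ^ 2 * b ^ 2) ≤ 4 * γ ^ 2 * ((X + R) ^ 2 * Y ^ 2) :=
      mul_le_mul_of_nonneg_left t1 (by positivity)
    have t2 : 2 * γ * b ^ 2 ≤ 2 * γ * Y ^ 2 :=
      mul_le_mul_of_nonneg_left hb2 (by positivity)
    have t3 : 2 * γ * |a * c| ≤ 2 * γ * ((X + R) * Z) :=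
      mul_le_mul_of_nonneg_left hab (by positivity)
    have expand : 2 * γ * ((1 + 2 * γ * (X + R) ^ 2) * Y ^ 2 + (X + R) * Z) =
        4 * γ ^ 2 * ((X + R) ^ 2 * Y ^ 2) + 2 * γ * Y ^ 2 + 2 * γ * ((X + R) * Z) := by
      ring
    rw [expand]
    linarith [t1', t2, t3]
  calc Real.exp (-γ * a ^ 2) * |4 * γ ^ 2 * a ^ 2 * b ^ 2 - 2 * γ * b ^ 2 - 2 * γ * (a * c)| 
      ≤ 1 * |4 * γ ^ 2 * a ^ 2 * b ^ 2 - 2 * γ * b ^ 2 - 2 * γ * (a * c)| := by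
        gcongr
    _ ≤ _ := by rw [one_mul]; exact hbound
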